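/- If R is right small injective, then for all b ∈ R and a ∈ J(R), l(bR ∩ r(a)) = l(b) + Ra. -/

import Mathlib

lemma unit_aux {R : Type*} [Ring R] {i : R} (hi : i ∈ (⊥ : Ideal R).jacobson) :
    ∃ s : R, (1 - i) * s = 1 := by
  obtain ⟨s, hs⟩ := Ideal.exists_mul_sub_mem_of_sub_one_mem_jacobson (1 - i)
    (by simpa using ((⊥ : Ideal R).jacobson.neg_mem hi))
  rw [Ideal.mem_bot, sub_eq_zero] at hs
  have hs1 : s - 1 ∈ (⊥ : Ideal R).jacobson := by
    have h := hs
    rw [mul_sub, mul_one, sub_eq_iff_eq_add] at h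
    have h1 : s - 1 = s * i := sub_eq_iff_eq_add.mpr (h.trans (add_comm _ _))
    rw [h1]; exact Ideal.mul_mem_left _ _ hi
  obtain ⟨t, ht⟩ := Ideal.exists_mul_sub_mem_of_sub_one_mem_jacobson s hs1
  rw [Ideal.mem_bot, sub_eq_zero] at ht
  refine ⟨s, ?_⟩
  have h2 : 1 - i = t := by
    calc 1 - i = t * s * (1 - i) := by rw [ht, one_mul]
    _ = t * (s * (1 - i)) := by rw [mul_assoc]
    _ = t := by rw [hs, mul_one]
  rw [h2, ht]

lemma small_of_le_jacobson {R : Type*} [Ring R] (I : Submodule Rᵐᵒᵖ R)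
    (hI : ∀ x ∈ I, x ∈ (⊥ : Ideal R).jacobson) :
    ∀ K : Submodule Rᵐᵒᵖ R, I ⊔ K = ⊤ → K = ⊤ := by
  intro K hK
  rw [Submodule.eq_top_iff']
  have h1 : (1 : R) ∈ I ⊔ K := hK ▸ Submodule.mem_top
  obtain ⟨i, hi, k, hk, hik⟩ := Submodule.mem_sup.mp h1
  have hk1 : k = 1 - i := by rw [← hik]; abel
  obtain ⟨s, hsi⟩ := unit_aux (hI i hi)
  have h1K : (1 : R) ∈ K := by
    have := K.smul_mem (MulOpposite.op s) hk
    rwa [MulOpposite.smul_eq_mul_unop, MulOpposite.unop_op, hk1, hsi] at this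
  intro x
  have := K.smul_mem (MulOpposite.op x) h1K
  rwa [MulOpposite.smul_eq_mul_unop, MulOpposite.unop_op, one_mul] at this



/-- A right ideal `I` of `R` (viewed as a submodule of `R` over `Rᵐᵒᵖ`) is small if
`I + K ≠ R` for every proper right ideal `K`. -/
def IsSmallRightIdeal {R : Type*} [Ring R] (I : Submodule Rᵐᵒᵖ R) : Prop :=
  ∀ K : Submodule Rᵐᵒᵖ R, I ⊔ K = ⊤ → K = ⊤

/-- A right `R`-module `M` is small injective if every `R`-homomorphism from a small right
ideal of `R` to `M` extends to a homomorphism `R → M`. -/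
def SmallInjective (R : Type*) [Ring R] (M : Type*) [AddCommGroup M] [Module Rᵐᵒᵖ M] : Prop :=
  ∀ I : Submodule Rᵐᵒᵖ R, IsSmallRightIdeal I → ∀ f : I →ₗ[Rᵐᵒᵖ] M,
    ∃ g : R →ₗ[Rᵐᵒᵖ] M, ∀ x : I, g x = f x


/-- The left annihilator `l(X) = {r : r * x = 0 ∀ x ∈ X}` of a subset `X ⊆ R`,
as a left ideal of `R`. -/
def leftAnn (R : Type*) [Ring R] (X : Set R) : Submodule R R where
  carrier := {r | ∀ x ∈ X, r * x = 0}
  add_mem' := by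
    intro a b ha hb x hx
    rw [add_mul, ha x hx, hb x hx, add_zero]
  zero_mem' := by intro x hx; rw [zero_mul]
  smul_mem' := by
    intro c a ha x hx
    show c * a * x = 0
    rw [mul_assoc, ha x hx, mul_zero]

/-- The right annihilator `r(X) = {r : x * r = 0 ∀ x ∈ X}` of a subset `X ⊆ R`,
as a right ideal of `R`. -/
def rightAnn (R : Type*) [Ring R] (X : Set R) : Submodule Rᵐᵒᵖ R where
  carrier := {r | ∀ x ∈ X, x * r = 0}
  add_mem' := by
    intro a b ha hb x hx
    rw [mul_add, ha x hx, hb x hx, add_zero]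
  zero_mem' := by intro x hx; rw [mul_zero]
  smul_mem' := by
    intro c a ha x hx
    show x * (a * c.unop) = 0
    rw [← mul_assoc, ha x hx, zero_mul]

/-- If `R` is right small injective, then for all `b ∈ R` and `a ∈ J(R)`,
`l(bR ∩ r(a)) = l(b) + Ra`. -/
theorem stmt_9 {R : Type*} [Ring R] (h : SmallInjective R R)
    (b a : R) (ha : a ∈ (⊥ : Ideal R).jacobson) :
    leftAnn R (↑(Submodule.span Rᵐᵒᵖ ({b} : Set R)) ∩ ↑(rightAnn R ({a} : Set R))) =
      leftAnn R ({b} : Set R) ⊔ Submodule.span R ({a} : Set R) := by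

  classical
  apply le_antisymm
  · -- hard direction: l(bR ∩ r(a)) ≤ l(b) ⊔ Ra
    intro c hc
    have hc' : ∀ y, y ∈ (↑(Submodule.span Rᵐᵒᵖ ({b} : Set R)) ∩ ↑(rightAnn R ({a} : Set R)) : Set R)
        → c * y = 0 := hc
    have key : ∀ r r' : R, a * b * r = a * b * r' → c * b * r = c * b * r' := by
      intro r r' hrr
      have hmem : b * r - b * r' ∈
          (↑(Submodule.span Rᵐᵒᵖ ({b} : Set R)) ∩ ↑(rightAnn R ({a} : Set R)) : Set R) := by
        constructor
        · show b * r - b * r' ∈ Submodule.span Rᵐᵒᵖ ({b} : Set R)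
          rw [Submodule.mem_span_singleton]
          exact ⟨MulOpposite.op (r - r'), by
            rw [MulOpposite.smul_eq_mul_unop, MulOpposite.unop_op, mul_sub]⟩
        · intro x hx
          rw [Set.mem_singleton_iff] at hx
          subst hx
          rw [mul_sub, ← mul_assoc, ← mul_assoc, hrr, sub_self]
      have h0 := hc' _ hmem
      rw [mul_sub, ← mul_assoc, ← mul_assoc, sub_eq_zero] at h0
      exact h0
    set I : Submodule Rᵐᵒᵖ R := Submodule.span Rᵐᵒᵖ ({a * b} : Set R) with hI
    have hIJ : ∀ x ∈ I, x ∈ (⊥ : Ideal R).jacobson := by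
      intro x hx
      rw [hI, Submodule.mem_span_singleton] at hx
      obtain ⟨t, rfl⟩ := hx
      rw [MulOpposite.smul_eq_mul_unop]
      exact Ideal.mul_mem_right _ _
        (Ideal.mul_mem_right _ _ ha)
    have hρex : ∀ x : I, ∃ r : R, a * b * r = (x : R) := by
      intro x
      have hx : (x : R) ∈ Submodule.span Rᵐᵒᵖ ({a * b} : Set R) := x.2
      rw [Submodule.mem_span_singleton] at hx
      obtain ⟨t, ht⟩ := hx
      exact ⟨t.unop, by rw [← ht, MulOpposite.smul_eq_mul_unop]⟩
    choose ρ hρ using hρex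
    let f : I →ₗ[Rᵐᵒᵖ] R :=
      { toFun := fun x => c * b * ρ x
        map_add' := by
          intro x y
          have hk := key (ρ (x + y)) (ρ x + ρ y)
            (by rw [hρ, mul_add, hρ, hρ, Submodule.coe_add])
          show c * b * ρ (x + y) = c * b * ρ x + c * b * ρ y
          rw [hk, mul_add]
        map_smul' := by
          intro m x
          have hk := key (ρ (m • x)) (ρ x * m.unop)
            (by rw [hρ, ← mul_assoc, hρ, Submodule.coe_smul, MulOpposite.smul_eq_mul_unop])
          show c * b * ρ (m • x) = m • (c * b * ρ x)
          rw [hk, MulOpposite.smul_eq_mul_unop, ← mul_assoc] }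
    obtain ⟨g, hg⟩ := h I (small_of_le_jacobson I hIJ) f
    set d := g 1 with hd
    have hdab : d * (a * b) = c * b := by
      have hmem : a * b ∈ I := by
        rw [hI]; exact Submodule.mem_span_singleton_self _
      have h1 : g (a * b) = f ⟨a * b, hmem⟩ := hg ⟨a * b, hmem⟩
      have h2 : g (a * b) = d * (a * b) := by
        have : g (a * b) = g (MulOpposite.op (a * b) • (1 : R)) := by
          rw [MulOpposite.smul_eq_mul_unop, MulOpposite.unop_op, one_mul]
        rw [this, map_smul, MulOpposite.smul_eq_mul_unop, MulOpposite.unop_op, hd]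
      have h3 : f ⟨a * b, hmem⟩ = c * b := by
        show c * b * ρ ⟨a * b, hmem⟩ = c * b
        have := key (ρ ⟨a * b, hmem⟩) 1 (by rw [hρ, mul_one])
        rw [this, mul_one]
      rw [← h2, h1, h3]
    have h1 : c - d * a ∈ leftAnn R ({b} : Set R) := by
      intro x hx
      rw [Set.mem_singleton_iff] at hx
      subst hx
      rw [sub_mul, mul_assoc, hdab, sub_self]
    have h2 : d * a ∈ Submodule.span R ({a} : Set R) := by
      rw [Submodule.mem_span_singleton]
      exact ⟨d, by rw [smul_eq_mul]⟩
    have := Submodule.add_mem_sup h1 h2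
    rwa [sub_add_cancel] at this
  · -- easy direction
    apply sup_le
    · intro x hx y hy
      have hxb : x * b = 0 := hx b rfl
      obtain ⟨hy1, hy2⟩ := hy
      rw [SetLike.mem_coe, Submodule.mem_span_singleton] at hy1
      obtain ⟨t, rfl⟩ := hy1
      rw [MulOpposite.smul_eq_mul_unop, ← mul_assoc, hxb, zero_mul]
    · intro x hx y hy
      rw [Submodule.mem_span_singleton] at hx
      obtain ⟨t, rfl⟩ := hx
      obtain ⟨hy1, hy2⟩ := hy
      have hay : a * y = 0 := hy2 a rfl
      rw [smul_eq_mul, mul_assoc, hay, mul_zero]
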